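/- As x → +∞ along the reals, Γ(x−1/2)/Γ(x) = (x−1/2)^(−1/2)·(1 + 1/(8(x−1/2)) + 1/(128(x−1/2)²) − 5/(1024(x−1/2)³)) + O(x^(−9/2)); that is, the function x ↦ Γ(x−1/2)/Γ(x) − (x−1/2)^(−1/2)·(1 + 1/(8(x−1/2)) + 1/(128(x−1/2)²) − 5/(1024(x−1/2)³)) is O(x^(−9/2)) along Filter.atTop. -/

import Mathlib

open Filter Asymptotics

noncomputable section GammaRatioAux
namespace GammaRatioAux

def pp (t : ℝ) : ℝ := t^3 + t^2/8 + t/128 - 5/1024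

def Pp (t : ℝ) : ℝ := 1 + 1/(8*t) + 1/(128*t^2) - 5/(1024*t^3)

def Qq (t : ℝ) : ℝ := (Pp t)^2

noncomputable def gg (y : ℝ) : ℝ := y * (Real.Gamma y)^2 / (Real.Gamma (y+1/2))^2

noncomputable def uu (y : ℝ) : ℝ := gg y / Qq y

def dd (t : ℝ) : ℝ := (1 + 1/(2*t)) / (Qq t * Qq (t+1/2)) - 1

def DD (t : ℝ) : ℝ := (pp t)^2 * (pp (t+1/2))^2

def NN (t : ℝ) : ℝ := (-632025/1099511627776) + (-161385/34359738368)*t^1 + (156877/8589934592)*t^2 + (283703/536870912)*t^3 + (809319/268435456)*t^4 + (15089/2097152)*t^5 + (3553/524288)*t^6 + (-21/8192)*t^8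

def N2 (t : ℝ) : ℝ := (-632025/35184372088832) + (-15908745/35184372088832)*t^1 + (-150508459/35184372088832)*t^2 + (-136512949/35184372088832)*t^3 + (11519747583/35184372088832)*t^4 + (560731402493/140737488355328)*t^5 + (1873246964989/70368744177664)*t^6 + (2128588031835/17592186044416)*t^7 + (3531343727889/8796093022208)*t^8 + (8825553411993/8796093022208)*t^9 + (8415259368969/4398046511104)*t^10 + (1530771271045/549755813888)*t^11 + (209626907117/68719476736)*t^12 + (20867732145/8589934592)*t^13 + (692436901/536870912)*t^14 + (22229687/67108864)*t^15 + (-345021/4194304)*t^16 + (-55701/524288)*t^17 + (-1239/32768)*t^18 + (-21/4096)*t^19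

lemma pp_lb {t : ℝ} (ht : 1 ≤ t) : t^3 ≤ pp t := by
  unfold pp; nlinarith [sq_nonneg t]

lemma pp_pos {t : ℝ} (ht : 1 ≤ t) : 0 < pp t :=
  lt_of_lt_of_le (by positivity) (pp_lb ht)

lemma Pp_lb {t : ℝ} (ht : 1 ≤ t) : 1 ≤ Pp t := by
  have ht0 : 0 < t := by linarith
  unfold Pp
  have h1 : 5/(1024*t^3) ≤ 1/(8*t) := by
    rw [div_le_div_iff₀ (by positivity) (by positivity)]
    nlinarith [sq_nonneg t, mul_le_mul ht ht (by linarith : (0:ℝ) ≤ 1) (by linarith : (0:ℝ) ≤ t)]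
  have h2 : 0 < 1/(128*t^2) := by positivity
  linarith

lemma Pp_ub {t : ℝ} (ht : 1 ≤ t) : Pp t ≤ 1 + 1/(4*t) := by
  have ht0 : 0 < t := by linarith
  unfold Pp
  have h1 : 1/(128*t^2) ≤ 1/(8*t) := by
    rw [div_le_div_iff₀ (by positivity) (by positivity)]
    nlinarith
  have h2 : 0 < 5/(1024*t^3) := by positivity
  have h3 : 1/(8*t) + 1/(8*t) = 1/(4*t) := by ring
  linarith

lemma Qq_lb {t : ℝ} (ht : 1 ≤ t) : 1 ≤ Qq t := by
  have := Pp_lb ht; unfold Qq; nlinarith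

lemma Qq_ub {t : ℝ} (ht : 1 ≤ t) : Qq t ≤ 1 + 1/t := by
  have ht0 : 0 < t := by linarith
  have h1 := Pp_lb ht
  have h2 := Pp_ub ht
  have h3 : (1 + 1/(4*t))^2 ≤ 1 + 1/t := by
    have e : (1 + 1/(4*t))^2 = 1 + 1/(2*t) + 1/(16*t^2) := by field_simp; ring
    rw [e]
    have h4 : 1/(16*t^2) ≤ 1/(2*t) := by
      rw [div_le_div_iff₀ (by positivity) (by positivity)]; nlinarith
    have h5 : 1/(2*t) + 1/(2*t) = 1/t := by ring
    linarith
  unfold Qq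
  nlinarith

lemma key_id (t : ℝ) : t^5*(t+1/2)^7 - DD t = NN t := by
  unfold DD NN pp; ring

set_option maxHeartbeats 1000000 in
lemma dd_eq {t : ℝ} (ht : 1 ≤ t) : dd t = NN t / DD t := by
  have ht0 : (0:ℝ) < t := by linarith
  have h1 : pp t ≠ 0 := (pp_pos ht).ne'
  have h2 : pp (t+1/2) ≠ 0 := (pp_pos (by linarith)).ne'
  have h3 : t ≠ 0 := ht0.ne'
  have h4 : t + 1/2 ≠ 0 := by positivity
  have hDD : DD t ≠ 0 := by unfold DD; positivity
  have hq : Qq t * Qq (t+1/2) = DD t / (t^6 * (t+1/2)^6) := by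
    unfold Qq Pp DD pp; field_simp
  rw [dd, hq, div_div_eq_mul_div, div_sub_one hDD]
  congr 1
  have e : (1 + 1/(2*t)) * (t^6*(t+1/2)^6) = t^5*(t+1/2)^7 := by
    field_simp
  rw [e, key_id]

lemma DD_lb {t : ℝ} (ht : 1 ≤ t) : t^12 ≤ DD t := by
  have h1 : t^3 ≤ pp t := pp_lb ht
  have h2 : t^3 ≤ pp (t+1/2) := le_trans (by nlinarith) (pp_lb (by linarith : (1:ℝ) ≤ t+1/2))
  have h0 : (0:ℝ) ≤ t^3 := by positivity
  have e1 : (t^3)^2 ≤ (pp t)^2 := pow_le_pow_left₀ h0 h1 2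
  have e2 : (t^3)^2 ≤ (pp (t+1/2))^2 := pow_le_pow_left₀ h0 h2 2
  have : (t^3)^2 * (t^3)^2 ≤ (pp t)^2 * (pp (t+1/2))^2 := by
    apply mul_le_mul e1 e2 (by positivity) (by positivity)
  calc t^12 = (t^3)^2 * (t^3)^2 := by ring
  _ ≤ _ := this

lemma DD_pos {t : ℝ} (ht : 1 ≤ t) : 0 < DD t :=
  lt_of_lt_of_le (by positivity) (DD_lb ht)


lemma NN_abs {t : ℝ} (ht : 1 ≤ t) : |NN t| ≤ (1/32) * t^8 := by
  have ht0 : (0:ℝ) < t := by linarith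
  have hp : ∀ i : ℕ, i ≤ 8 → t^i ≤ t^8 := fun i hi => pow_le_pow_right₀ ht hi
  have hn : ∀ i : ℕ, (0:ℝ) ≤ t^i := fun i => by positivity
  rw [abs_le]; unfold NN
  constructor
  · nlinarith [hp 0 (by norm_num), hp 1 (by norm_num), hp 2 (by norm_num), hp 3 (by norm_num),
      hp 4 (by norm_num), hp 5 (by norm_num), hp 6 (by norm_num),
      hn 0, hn 1, hn 2, hn 3, hn 4, hn 5, hn 6, hn 8]
  · nlinarith [hp 0 (by norm_num), hp 1 (by norm_num), hp 2 (by norm_num), hp 3 (by norm_num),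
      hp 4 (by norm_num), hp 5 (by norm_num), hp 6 (by norm_num),
      hn 0, hn 1, hn 2, hn 3, hn 4, hn 5, hn 6, hn 8]

lemma N2_abs {t : ℝ} (ht : 1 ≤ t) : |N2 t| ≤ 14 * t^19 := by
  have ht0 : (0:ℝ) < t := by linarith
  have hp : ∀ i : ℕ, i ≤ 19 → t^i ≤ t^19 := fun i hi => pow_le_pow_right₀ ht hi
  have hn : ∀ i : ℕ, (0:ℝ) ≤ t^i := fun i => by positivity
  rw [abs_le]; unfold N2
  constructor
  · nlinarith [hp 0 (by norm_num), hp 1 (by norm_num), hp 2 (by norm_num), hp 3 (by norm_num),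
      hp 4 (by norm_num), hp 5 (by norm_num), hp 6 (by norm_num), hp 7 (by norm_num),
      hp 8 (by norm_num), hp 9 (by norm_num), hp 10 (by norm_num), hp 11 (by norm_num),
      hp 12 (by norm_num), hp 13 (by norm_num), hp 14 (by norm_num), hp 15 (by norm_num),
      hp 16 (by norm_num), hp 17 (by norm_num), hp 18 (by norm_num),
      hn 0, hn 1, hn 2, hn 3, hn 4, hn 5, hn 6, hn 7, hn 8, hn 9, hn 10, hn 11, hn 12,
      hn 13, hn 14, hn 15, hn 16, hn 17, hn 18, hn 19]
  · nlinarith [hp 0 (by norm_num), hp 1 (by norm_num), hp 2 (by norm_num), hp 3 (by norm_num),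
      hp 4 (by norm_num), hp 5 (by norm_num), hp 6 (by norm_num), hp 7 (by norm_num),
      hp 8 (by norm_num), hp 9 (by norm_num), hp 10 (by norm_num), hp 11 (by norm_num),
      hp 12 (by norm_num), hp 13 (by norm_num), hp 14 (by norm_num), hp 15 (by norm_num),
      hp 16 (by norm_num), hp 17 (by norm_num), hp 18 (by norm_num),
      hn 0, hn 1, hn 2, hn 3, hn 4, hn 5, hn 6, hn 7, hn 8, hn 9, hn 10, hn 11, hn 12,
      hn 13, hn 14, hn 15, hn 16, hn 17, hn 18, hn 19]

set_option maxHeartbeats 2000000 in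
lemma N2_id (t : ℝ) : NN t * DD (t+1/2) - NN (t+1/2) * DD t = N2 t := by
  unfold NN DD N2 pp; ring

lemma dd_abs {t : ℝ} (ht : 1 ≤ t) : |dd t| ≤ 1/(32*t^4) := by
  have ht0 : (0:ℝ) < t := by linarith
  rw [dd_eq ht, abs_div, abs_of_pos (DD_pos ht)]
  have h1 := NN_abs ht
  have h2 := DD_lb ht
  have h3 : (0:ℝ) < t^12 := by positivity
  calc |NN t| / DD t ≤ ((1/32)*t^8) / t^12 :=
        div_le_div₀ (by positivity) h1 h3 h2
    _ = 1/(32*t^4) := by field_simp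

lemma dd_small {t : ℝ} (ht : 1 ≤ t) : |dd t| ≤ 1/32 := by
  have h := dd_abs ht
  have : 1/(32*t^4) ≤ 1/32 := by
    rw [div_le_div_iff₀ (by positivity) (by norm_num)]
    nlinarith [pow_le_pow_left₀ (by linarith : (0:ℝ) ≤ 1) ht 4]
  linarith

lemma dd_diff {t : ℝ} (ht : 1 ≤ t) : |dd t - dd (t+1/2)| ≤ 14 / t^5 := by
  have ht0 : (0:ℝ) < t := by linarith
  have ht2 : (1:ℝ) ≤ t + 1/2 := by linarith
  have hD1 := DD_pos ht
  have hD2 := DD_pos ht2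
  have e : dd t - dd (t+1/2) = N2 t / (DD t * DD (t+1/2)) := by
    rw [dd_eq ht, dd_eq ht2, div_sub_div _ _ hD1.ne' hD2.ne',
      show NN t * DD (t+1/2) - DD t * NN (t+1/2)
          = NN t * DD (t+1/2) - NN (t+1/2) * DD t from by ring, N2_id]
  rw [e, abs_div, abs_of_pos (mul_pos hD1 hD2)]
  have h1 := N2_abs ht
  have h2 : t^24 ≤ DD t * DD (t+1/2) := by
    have a := DD_lb ht
    have b := DD_lb ht2
    have c : t^12 ≤ (t+1/2)^12 := pow_le_pow_left₀ (by linarith) (by linarith) 12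
    calc t^24 = t^12 * t^12 := by ring
      _ ≤ DD t * DD (t+1/2) := mul_le_mul a (le_trans c b) (by positivity) (by positivity)
  calc |N2 t| / (DD t * DD (t+1/2)) ≤ (14*t^19) / t^24 :=
        div_le_div₀ (by positivity) h1 (by positivity) h2
    _ = 14 / t^5 := by field_simp


open Real in
lemma sq_rpow_half {x : ℝ} (hx : 0 ≤ x) : (x ^ ((1:ℝ)/2))^2 = x := by
  rw [← Real.rpow_natCast (x ^ ((1:ℝ)/2)) 2, ← Real.rpow_mul hx]
  norm_num

lemma gamma_sq_lb {y : ℝ} (hy : 0 < y) :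
    (Real.Gamma (y+1/2))^2 ≤ y * (Real.Gamma y)^2 := by
  have h := Real.Gamma_mul_add_mul_le_rpow_Gamma_mul_rpow_Gamma
    (s := y) (t := y+1) (a := 1/2) (b := 1/2) hy (by linarith) one_half_pos one_half_pos
    (by norm_num)
  rw [show (1/2)*y + (1/2)*(y+1) = y + 1/2 by ring] at h
  have hΓ : 0 < Real.Gamma y := Real.Gamma_pos_of_pos hy
  have hΓ1 : 0 < Real.Gamma (y+1) := Real.Gamma_pos_of_pos (by linarith)
  have hΓh : 0 ≤ Real.Gamma (y+1/2) := (Real.Gamma_pos_of_pos (by linarith)).le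
  have h2 : (Real.Gamma (y+1/2))^2 ≤ (Real.Gamma y ^ ((1:ℝ)/2) * Real.Gamma (y+1) ^ ((1:ℝ)/2))^2 :=
    pow_le_pow_left₀ hΓh h 2
  rw [mul_pow, sq_rpow_half hΓ.le, sq_rpow_half hΓ1.le,
    Real.Gamma_add_one hy.ne'] at h2
  nlinarith [h2]

lemma gamma_sq_ub {y : ℝ} (hy : 0 < y) :
    y^2 * (Real.Gamma y)^2 ≤ (y+1/2) * (Real.Gamma (y+1/2))^2 := by
  have h := Real.Gamma_mul_add_mul_le_rpow_Gamma_mul_rpow_Gamma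
    (s := y+1/2) (t := y+3/2) (a := 1/2) (b := 1/2) (by linarith) (by linarith)
    one_half_pos one_half_pos (by norm_num)
  rw [show (1/2)*(y+1/2) + (1/2)*(y+3/2) = y + 1 by ring] at h
  have hΓh : 0 < Real.Gamma (y+1/2) := Real.Gamma_pos_of_pos (by linarith)
  have hΓ3 : 0 < Real.Gamma (y+3/2) := Real.Gamma_pos_of_pos (by linarith)
  have hΓ1 : 0 ≤ Real.Gamma (y+1) := (Real.Gamma_pos_of_pos (by linarith)).le
  have h2 : (Real.Gamma (y+1))^2 ≤ (Real.Gamma (y+1/2) ^ ((1:ℝ)/2) * Real.Gamma (y+3/2) ^ ((1:ℝ)/2))^2 :=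
    pow_le_pow_left₀ hΓ1 h 2
  rw [mul_pow, sq_rpow_half hΓh.le, sq_rpow_half hΓ3.le] at h2
  have e3 : Real.Gamma (y+3/2) = (y+1/2) * Real.Gamma (y+1/2) := by
    rw [show y+3/2 = (y+1/2)+1 by ring, Real.Gamma_add_one (by positivity)]
  have e1 : Real.Gamma (y+1) = y * Real.Gamma y := Real.Gamma_add_one hy.ne'
  rw [e3, e1] at h2
  nlinarith [h2]

lemma gg_fe {y : ℝ} (hy : 0 < y) : gg y * gg (y+1/2) = 1 + 1/(2*y) := by
  have hΓ : Real.Gamma y ≠ 0 := (Real.Gamma_pos_of_pos hy).ne'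
  have hΓh : Real.Gamma (y+1/2) ≠ 0 := (Real.Gamma_pos_of_pos (by linarith)).ne'
  have e1 : Real.Gamma (y+1/2+1/2) = y * Real.Gamma y := by
    rw [show y+1/2+1/2 = y+1 by ring, Real.Gamma_add_one hy.ne']
  unfold gg
  rw [e1]
  field_simp

lemma gg_lb {y : ℝ} (hy : 0 < y) : 1 ≤ gg y := by
  have h := gamma_sq_lb hy
  have hΓh : 0 < (Real.Gamma (y+1/2))^2 := by
    have := Real.Gamma_pos_of_pos (show (0:ℝ) < y+1/2 by linarith); positivity
  rw [gg, le_div_iff₀ hΓh, one_mul]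
  exact h

lemma gg_ub {y : ℝ} (hy : 0 < y) : gg y ≤ 1 + 1/(2*y) := by
  have h := gamma_sq_ub hy
  have hΓh : 0 < (Real.Gamma (y+1/2))^2 := by
    have := Real.Gamma_pos_of_pos (show (0:ℝ) < y+1/2 by linarith); positivity
  rw [gg, div_le_iff₀ hΓh]
  have e : (1 + 1/(2*y)) = (y+1/2)/y := by field_simp
  rw [e, div_mul_eq_mul_div, le_div_iff₀ hy]
  nlinarith [h]

lemma gg_pos {y : ℝ} (hy : 0 < y) : 0 < gg y := lt_of_lt_of_le one_pos (gg_lb hy)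

lemma Qq_pos {t : ℝ} (ht : 1 ≤ t) : 0 < Qq t := lt_of_lt_of_le one_pos (Qq_lb ht)

lemma uu_pos {t : ℝ} (ht : 1 ≤ t) : 0 < uu t :=
  div_pos (gg_pos (by linarith)) (Qq_pos ht)

lemma uu_fe {t : ℝ} (ht : 1 ≤ t) : uu t * uu (t+1/2) = 1 + dd t := by
  have ht0 : (0:ℝ) < t := by linarith
  have e : uu t * uu (t+1/2) = (gg t * gg (t+1/2)) / (Qq t * Qq (t+1/2)) :=
    div_mul_div_comm _ _ _ _
  rw [e, gg_fe ht0, dd]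
  ring

lemma uu_close {t : ℝ} (ht : 1 ≤ t) : |uu t - 1| ≤ 1/t := by
  have ht0 : (0:ℝ) < t := by linarith
  have hq1 := Qq_lb ht
  have hq2 := Qq_ub ht
  have hg1 := gg_lb (show (0:ℝ) < t by linarith)
  have hg2 := gg_ub (show (0:ℝ) < t by linarith)
  have hqpos : 0 < Qq t := by linarith
  rw [abs_le]
  constructor
  · have h1 : Qq t * (1 - 1/t) ≤ gg t := by
      have : Qq t * (1 - 1/t) ≤ (1 + 1/t) * (1 - 1/t) := by
        have h0 : (0:ℝ) ≤ 1 - 1/t := by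
          rw [sub_nonneg, div_le_one ht0]; exact ht
        nlinarith
      have h2 : (1 + 1/t) * (1 - 1/t) ≤ 1 := by
        have : (0:ℝ) < 1/t := by positivity
        nlinarith
      linarith
    rw [mul_comm] at h1
    have h3 := (le_div_iff₀ hqpos).mpr h1
    rw [uu]; linarith
  · have h1 : gg t ≤ Qq t * (1 + 1/t) := by
      have ha : gg t ≤ 1 + 1/(2*t) := hg2
      have hb : 1 + 1/(2*t) ≤ 1 + 1/t := by
        have : 1/(2*t) ≤ 1/t := by
          rw [div_le_div_iff₀ (by positivity) ht0]; nlinarith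
        linarith
      nlinarith
    have := (div_le_iff₀ hqpos).mpr (by linarith : gg t ≤ (1 + 1/t) * Qq t)
    rw [uu]; linarith


noncomputable def LL (t : ℝ) : ℝ := Real.log (uu t)

lemma LL_step {t : ℝ} (ht : 1 ≤ t) : LL t + LL (t+1/2) = Real.log (1 + dd t) := by
  have h1 := uu_pos ht
  have h2 := uu_pos (show (1:ℝ) ≤ t+1/2 by linarith)
  rw [LL, LL, ← Real.log_mul h1.ne' h2.ne', uu_fe ht]

lemma LL_step2 {t : ℝ} (ht : 1 ≤ t) :
    LL t = (Real.log (1 + dd t) - Real.log (1 + dd (t+1/2))) + LL (t+1) := by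
  have h1 := LL_step ht
  have h2 := LL_step (show (1:ℝ) ≤ t+1/2 by linarith)
  rw [show t+1/2+1/2 = t+1 by ring] at h2
  linarith

lemma LL_telescope (n : ℕ) : ∀ t : ℝ, 1 ≤ t →
    LL t = (∑ j ∈ Finset.range n,
      (Real.log (1 + dd (t+j)) - Real.log (1 + dd (t+j+1/2)))) + LL (t+n) := by
  induction n with
  | zero => intro t ht; simp
  | succ n ih =>
    intro t ht
    rw [Finset.sum_range_succ]
    have h1 := ih t ht
    have h2 := LL_step2 (show (1:ℝ) ≤ t + n by
      have : (0:ℝ) ≤ (n:ℝ) := Nat.cast_nonneg n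
      linarith)
    have e : t + (n:ℝ) + 1 = t + ((n:ℕ)+1 : ℕ) := by push_cast; ring
    rw [e] at h2
    rw [h1, h2]
    push_cast
    ring

lemma log_one_add_le {a b : ℝ} (ha : |a| ≤ 1/32) (hb : |b| ≤ 1/32) :
    Real.log (1+a) - Real.log (1+b) ≤ 2 * |a-b| := by
  rw [abs_le] at ha hb
  have h1a : (0:ℝ) < 1+a := by linarith
  have h1b : (0:ℝ) < 1+b := by linarith
  have h1 : Real.log (1+a) - Real.log (1+b) ≤ (1+a)/(1+b) - 1 := by
    rw [← Real.log_div h1a.ne' h1b.ne']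
    exact Real.log_le_sub_one_of_pos (div_pos h1a h1b)
  have h2 : (1+a)/(1+b) - 1 = (a-b)/(1+b) := by field_simp; ring
  have h3 : (a-b)/(1+b) ≤ 2 * |a-b| := by
    rw [div_le_iff₀ h1b]
    nlinarith [le_abs_self (a-b), abs_nonneg (a-b)]
  linarith

lemma log_diff_abs {a b : ℝ} (ha : |a| ≤ 1/32) (hb : |b| ≤ 1/32) :
    |Real.log (1+a) - Real.log (1+b)| ≤ 2 * |a-b| := by
  rw [abs_le]
  constructor
  · have := log_one_add_le hb ha
    rw [abs_sub_comm] at this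
    linarith
  · exact log_one_add_le ha hb

lemma eps_diff {s : ℝ} (hs : 1 ≤ s) :
    |Real.log (1 + dd s) - Real.log (1 + dd (s+1/2))| ≤ 28 / s^5 := by
  have h := log_diff_abs (dd_small hs) (dd_small (show (1:ℝ) ≤ s+1/2 by linarith))
  have h2 := dd_diff hs
  calc |Real.log (1 + dd s) - Real.log (1 + dd (s+1/2))| ≤ 2 * |dd s - dd (s+1/2)| := h
    _ ≤ 2 * (14/s^5) := by linarith
    _ = 28 / s^5 := by ring

lemma key_step {t : ℝ} (ht : 1 ≤ t) : 1/(t+1)^5 + 1/(4*(t+1)^4) ≤ 1/(4*t^4) := by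
  have ht0 : (0:ℝ) < t := by linarith
  have h1 : (0:ℝ) < (t+1)^5 := by positivity
  have h2 : (0:ℝ) < 4*(t+1)^4 := by positivity
  have h3 : (0:ℝ) < 4*t^4 := by positivity
  rw [div_add_div _ _ h1.ne' h2.ne', div_le_div_iff₀ (by positivity) h3]
  nlinarith [pow_pos ht0 4, pow_pos ht0 3]

lemma sum_tail (n : ℕ) : ∀ t : ℝ, 1 ≤ t →
    ∑ j ∈ Finset.range n, 1/(t+1+(j:ℝ))^5 ≤ 1/(4*t^4) - 1/(4*(t+n)^4) := by
  induction n with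
  | zero => intro t ht; simp
  | succ n ih =>
    intro t ht
    rw [Finset.sum_range_succ']
    have e : ∀ j ∈ Finset.range n, 1/(t+1+((j:ℕ)+1:ℕ):ℝ)^5 = 1/((t+1)+1+(j:ℝ))^5 := by
      intro j _; push_cast; ring_nf
    rw [Finset.sum_congr rfl e]
    have h1 := ih (t+1) (by linarith)
    have h2 := key_step ht
    have e2 : t + 1 + ((n:ℕ):ℝ) = t + ((n:ℕ)+1:ℕ) := by push_cast; ring
    rw [e2] at h1
    have e3 : 1/(t+1+((0:ℕ):ℝ))^5 = 1/(t+1)^5 := by norm_num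
    rw [e3]
    have h4 : (0:ℝ) < 4*(t+((n:ℕ)+1:ℕ):ℝ)^4 := by
      have : (0:ℝ) ≤ (((n:ℕ)+1:ℕ):ℝ) := Nat.cast_nonneg _
      positivity
    linarith

lemma sum_bound (n : ℕ) {t : ℝ} (ht : 1 ≤ t) :
    ∑ j ∈ Finset.range n, 28/(t+(j:ℝ))^5 ≤ 28/t^5 + 7/t^4 := by
  have ht0 : (0:ℝ) < t := by linarith
  cases n with
  | zero => simp; positivity
  | succ n =>
    rw [Finset.sum_range_succ']
    have e : ∀ j ∈ Finset.range n, 28/(t+((j:ℕ)+1:ℕ):ℝ)^5 = 28 * (1/((t+1)+(j:ℝ))^5) := by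
      intro j _; push_cast; ring_nf
    rw [Finset.sum_congr rfl e, ← Finset.mul_sum]
    have h1 : ∑ j ∈ Finset.range n, 1/((t+1)+(j:ℝ))^5 ≤ 1/(4*t^4) := by
      have h := sum_tail n t ht
      have : ∀ j ∈ Finset.range n, 1/((t+1)+(j:ℝ))^5 = 1/(t+1+(j:ℝ))^5 := by
        intro j _; ring_nf
      rw [Finset.sum_congr rfl this]
      have h5 : (0:ℝ) ≤ 1/(4*(t+(n:ℝ))^4) := by
        have : (0:ℝ) ≤ (n:ℝ) := Nat.cast_nonneg _
        positivity
      linarith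
    have e0 : 28/(t+((0:ℕ):ℝ))^5 = 28/t^5 := by norm_num
    rw [e0]
    have h28 : 28 * ∑ j ∈ Finset.range n, 1/((t+1)+(j:ℝ))^5 ≤ 28 * (1/(4*t^4)) := by
      linarith
    have e4 : 28 * (1/(4*t^4)) = 7/t^4 := by ring
    linarith [h28, e4.le]

lemma log_close {x : ℝ} (hx : 1/2 ≤ x) : |Real.log x| ≤ 2*|x-1| := by
  have hx0 : (0:ℝ) < x := by linarith
  rcases le_total 1 x with h | h
  · rw [abs_of_nonneg (Real.log_nonneg h), abs_of_nonneg (by linarith)]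
    have := Real.log_le_sub_one_of_pos hx0
    linarith
  · rw [abs_of_nonpos (Real.log_nonpos (by linarith) h), abs_of_nonpos (by linarith)]
    have h2 := Real.log_le_sub_one_of_pos (inv_pos.mpr hx0)
    rw [Real.log_inv] at h2
    have h3 : x⁻¹ ≤ 3 - 2*x := by
      have hxx : x * x⁻¹ = 1 := mul_inv_cancel₀ hx0.ne'
      nlinarith [mul_nonneg (show (0:ℝ) ≤ 2*x-1 by linarith) (show (0:ℝ) ≤ 1-x by linarith)]
    linarith

lemma LL_bound {t : ℝ} (ht : 2 ≤ t) : |LL t| ≤ 37/t^4 := by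
  have ht1 : (1:ℝ) ≤ t := by linarith
  have ht0 : (0:ℝ) < t := by linarith
  set n : ℕ := ⌈t⌉₊^4 with hn
  have hnt : t^4 ≤ (n:ℝ) := by
    have h1 : t ≤ (⌈t⌉₊:ℝ) := Nat.le_ceil t
    have h2 : t^4 ≤ ((⌈t⌉₊:ℝ))^4 := pow_le_pow_left₀ ht0.le h1 4
    rw [hn]; push_cast; linarith
  have hn0 : (0:ℝ) ≤ (n:ℝ) := Nat.cast_nonneg n
  have htel := LL_telescope n t ht1
  have hsum : |∑ j ∈ Finset.range n,
      (Real.log (1 + dd (t+(j:ℝ))) - Real.log (1 + dd (t+(j:ℝ)+1/2)))| ≤ 28/t^5 + 7/t^4 := by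
    calc |∑ j ∈ Finset.range n,
        (Real.log (1 + dd (t+(j:ℝ))) - Real.log (1 + dd (t+(j:ℝ)+1/2)))|
        ≤ ∑ j ∈ Finset.range n,
          |Real.log (1 + dd (t+(j:ℝ))) - Real.log (1 + dd (t+(j:ℝ)+1/2))| :=
          Finset.abs_sum_le_sum_abs _ _
      _ ≤ ∑ j ∈ Finset.range n, 28/(t+(j:ℝ))^5 := by
          apply Finset.sum_le_sum
          intro j _
          exact eps_diff (by have : (0:ℝ) ≤ (j:ℝ) := Nat.cast_nonneg j; linarith)
      _ ≤ 28/t^5 + 7/t^4 := sum_bound n ht1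
  have htn1 : (1:ℝ) ≤ t+(n:ℝ) := by linarith
  have htail : |LL (t+(n:ℝ))| ≤ 2/t^4 := by
    have hu := uu_close htn1
    have htn2 : (2:ℝ) ≤ t+(n:ℝ) := by linarith
    have hu2 : 1/(t+(n:ℝ)) ≤ 1/2 := by
      rw [div_le_div_iff₀ (by linarith) (by norm_num)]; linarith
    have huhalf : 1/2 ≤ uu (t+(n:ℝ)) := by
      rw [abs_le] at hu; linarith
    have h1 : |LL (t+(n:ℝ))| ≤ 2 * |uu (t+(n:ℝ)) - 1| := log_close huhalf
    have h2 : 1/(t+(n:ℝ)) ≤ 1/t^4 := by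
      apply one_div_le_one_div_of_le (by positivity)
      linarith
    calc |LL (t+(n:ℝ))| ≤ 2 * |uu (t+(n:ℝ)) - 1| := h1
      _ ≤ 2 * (1/(t+(n:ℝ))) := by linarith
      _ ≤ 2 * (1/t^4) := by linarith
      _ = 2/t^4 := by ring
  have h5 : 28/t^5 ≤ 14/t^4 := by
    rw [div_le_div_iff₀ (by positivity) (by positivity)]
    nlinarith [pow_pos ht0 4, mul_nonneg (pow_nonneg ht0.le 4) (show (0:ℝ) ≤ t-2 by linarith)]
  calc |LL t| = |(∑ j ∈ Finset.range n,
        (Real.log (1 + dd (t+(j:ℝ))) - Real.log (1 + dd (t+(j:ℝ)+1/2)))) + LL (t+(n:ℝ))| := by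
        rw [← htel]
    _ ≤ |∑ j ∈ Finset.range n,
        (Real.log (1 + dd (t+(j:ℝ))) - Real.log (1 + dd (t+(j:ℝ)+1/2)))| + |LL (t+(n:ℝ))| :=
        abs_add_le _ _
    _ ≤ (28/t^5 + 7/t^4) + 2/t^4 := by linarith
    _ ≤ 37/t^4 := by
        have hpos : (0:ℝ) ≤ 1/t^4 := by positivity
        have e1 : (28/t^5 + 7/t^4) + 2/t^4 ≤ 14/t^4 + 7/t^4 + 2/t^4 := by linarith
        have e2 : 14/t^4 + 7/t^4 + 2/t^4 = 23 * (1/t^4) := by ring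
        have e3 : (37:ℝ)/t^4 = 37 * (1/t^4) := by ring
        rw [e3]; linarith [e2.le, e2.ge]

lemma uu_final {t : ℝ} (ht : 3 ≤ t) : |uu t - 1| ≤ 74/t^4 := by
  have ht1 : (1:ℝ) ≤ t := by linarith
  have ht0 : (0:ℝ) < t := by linarith
  have hL := LL_bound (by linarith : (2:ℝ) ≤ t)
  have hL1 : |LL t| ≤ 1 := by
    have : 37/t^4 ≤ 1 := by
      rw [div_le_one (by positivity)]
      nlinarith [pow_le_pow_left₀ (show (0:ℝ) ≤ 3 by norm_num) ht 4]
    linarith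
  have he : uu t = Real.exp (LL t) := (Real.exp_log (uu_pos ht1)).symm
  rw [he]
  calc |Real.exp (LL t) - 1| ≤ 2 * |LL t| := Real.abs_exp_sub_one_le hL1
    _ ≤ 2 * (37/t^4) := by linarith
    _ = 74/t^4 := by ring

lemma sqrt_close {u : ℝ} (hu : 0 ≤ u) : |Real.sqrt u - 1| ≤ |u - 1| := by
  rcases le_total 1 u with h | h
  · have h1 : 1 ≤ Real.sqrt u := Real.one_le_sqrt.mpr h
    have h2 : Real.sqrt u ≤ u := by
      have e : u = Real.sqrt (u^2) := (Real.sqrt_sq hu).symm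
      nth_rewrite 2 [e]
      exact Real.sqrt_le_sqrt (by nlinarith)
    rw [abs_of_nonneg (by linarith), abs_of_nonneg (by linarith)]
    linarith
  · have h1 : Real.sqrt u ≤ 1 := by
      rw [show (1:ℝ) = Real.sqrt 1 from (Real.sqrt_one).symm]
      exact Real.sqrt_le_sqrt h
    have h2 : u ≤ Real.sqrt u := by
      have e : u = Real.sqrt (u^2) := (Real.sqrt_sq hu).symm
      nth_rewrite 1 [e]
      exact Real.sqrt_le_sqrt (by nlinarith)
    rw [abs_of_nonpos (by linarith), abs_of_nonpos (by linarith)]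
    linarith

end GammaRatioAux

set_option maxHeartbeats 1000000 in
open GammaRatioAux in
theorem gamma_ratio_asymptotic_expansion :
    (fun x : ℝ =>
        Real.Gamma (x - 1/2) / Real.Gamma x -
          (x - 1/2) ^ (-(1/2) : ℝ) *
            (1 + 1 / (8 * (x - 1/2)) + 1 / (128 * (x - 1/2) ^ 2)
              - 5 / (1024 * (x - 1/2) ^ 3)))
      =O[atTop] fun x : ℝ => x ^ (-(9/2) : ℝ) := by
  rw [Asymptotics.isBigO_iff]
  refine ⟨3000, ?_⟩
  filter_upwards [Filter.eventually_ge_atTop (4:ℝ)] with x hx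
  have hx0 : (0:ℝ) < x := by linarith
  have hy0 : (0:ℝ) < x - 1/2 := by linarith
  have hy1 : (1:ℝ) ≤ x - 1/2 := by linarith
  have hy3 : (3:ℝ) ≤ x - 1/2 := by linarith
  set y := x - 1/2 with hydef
  clear_value y
  have hxy : Real.Gamma x = Real.Gamma (y + 1/2) := by congr 1; rw [hydef]; ring
  have hΓy : 0 < Real.Gamma y := Real.Gamma_pos_of_pos hy0
  have hΓh : 0 < Real.Gamma (y+1/2) := Real.Gamma_pos_of_pos (by linarith)
  have hsy : 0 < Real.sqrt y := Real.sqrt_pos.mpr hy0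
  have hQpos := Qq_pos hy1
  have hupos := uu_pos hy1
  have hPp : 1 ≤ Pp y := Pp_lb hy1
  have h1 : Real.sqrt (gg y) = Real.sqrt y * (Real.Gamma y / Real.Gamma (y+1/2)) := by
    have hgg : gg y = (Real.sqrt y * (Real.Gamma y / Real.Gamma (y+1/2)))^2 := by
      rw [gg, mul_pow, Real.sq_sqrt hy0.le, div_pow]; ring
    rw [hgg, Real.sqrt_sq (by positivity)]
  have h2 : Real.sqrt (gg y) = Pp y * Real.sqrt (uu y) := by
    have huy : gg y = Qq y * uu y := by
      rw [uu, mul_div_cancel₀ _ hQpos.ne']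
    rw [huy, Real.sqrt_mul hQpos.le, Qq, Real.sqrt_sq (by linarith)]
  have hratio : Real.Gamma y / Real.Gamma (y+1/2) = Pp y * Real.sqrt (uu y) / Real.sqrt y := by
    rw [← h2, h1]
    field_simp
  have hrp : y ^ (-(1/2) : ℝ) = (Real.sqrt y)⁻¹ := by
    rw [Real.rpow_neg hy0.le, Real.sqrt_eq_rpow]
  have hbr : (1 + 1 / (8 * y) + 1 / (128 * y ^ 2) - 5 / (1024 * y ^ 3)) = Pp y := rfl
  rw [hxy, hratio, hrp, hbr]
  have hdiff : Pp y * Real.sqrt (uu y) / Real.sqrt y - (Real.sqrt y)⁻¹ * Pp y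
      = (Pp y / Real.sqrt y) * (Real.sqrt (uu y) - 1) := by
    field_simp
  rw [hdiff, Real.norm_eq_abs, Real.norm_eq_abs]
  have hrx : |x ^ (-(9/2):ℝ)| = (x^4 * Real.sqrt x)⁻¹ := by
    rw [abs_of_pos (Real.rpow_pos_of_pos hx0 _), Real.rpow_neg hx0.le]
    congr 1
    rw [show ((9:ℝ)/2) = ((4:ℕ):ℝ) + (1/2:ℝ) by norm_num, Real.rpow_add hx0,
      Real.rpow_natCast, ← Real.sqrt_eq_rpow]
  rw [hrx]
  have hu74 : |uu y - 1| ≤ 74/y^4 := uu_final hy3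
  have hsq : |Real.sqrt (uu y) - 1| ≤ 74/y^4 := le_trans (sqrt_close hupos.le) hu74
  have hPub : Pp y ≤ 5/4 := by
    have h := Pp_ub hy1
    have : 1/(4*y) ≤ 1/4 := by
      rw [div_le_div_iff₀ (by linarith) (by norm_num)]; linarith
    linarith
  have e1 : |Pp y / Real.sqrt y * (Real.sqrt (uu y) - 1)|
      = (Pp y / Real.sqrt y) * |Real.sqrt (uu y) - 1| := by
    rw [abs_mul, abs_of_nonneg (div_nonneg (by linarith) hsy.le)]
  rw [e1]
  have hB : (0:ℝ) < y^4 * Real.sqrt y := mul_pos (pow_pos hy0 4) hsy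
  have hA : (0:ℝ) < x^4 * Real.sqrt x := mul_pos (pow_pos hx0 4) (Real.sqrt_pos.mpr hx0)
  have step1 : (Pp y / Real.sqrt y) * |Real.sqrt (uu y) - 1| ≤ ((5/4)/Real.sqrt y) * (74/y^4) := by
    apply mul_le_mul
    · gcongr
    · exact hsq
    · exact abs_nonneg _
    · positivity
  have step2 : ((5/4)/Real.sqrt y) * (74/y^4) = (185/2)/(y^4 * Real.sqrt y) := by
    rw [div_mul_div_comm]
    ring_nf
  have hx2y : x ≤ 2*y := by rw [hydef]; linarith
  have hx4 : x^4 ≤ 16*y^4 := by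
    have := pow_le_pow_left₀ hx0.le hx2y 4
    nlinarith [this]
  have hsx : Real.sqrt x ≤ 2*Real.sqrt y := by
    have h4 : x ≤ 4*y := by linarith
    calc Real.sqrt x ≤ Real.sqrt (4*y) := Real.sqrt_le_sqrt h4
      _ = 2*Real.sqrt y := by
          rw [show (4:ℝ)*y = (2:ℝ)^2*y by norm_num, Real.sqrt_mul (by positivity),
            Real.sqrt_sq (by norm_num)]
  have hprod : x^4*Real.sqrt x ≤ 32*(y^4*Real.sqrt y) := by
    nlinarith [Real.sqrt_nonneg x, Real.sqrt_nonneg y, pow_nonneg hx0.le 4,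
      pow_nonneg hy0.le 4, hx4, hsx]
  have step3 : (185/2)/(y^4 * Real.sqrt y) ≤ 3000 * (x^4 * Real.sqrt x)⁻¹ := by
    rw [← div_eq_mul_inv, div_le_div_iff₀ hB hA]
    nlinarith [hprod, hB]
  linarith [step1, step2.le, step2.ge, step3]
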